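/- Define, for an integer x and a positive integer c, G₁(x; c) = c^{-2} ∑_{b=0}^{c-1} e(−x̄ b²/c) if gcd(x, c) = 1 (where x̄ is any integer with x x̄ ≡ 1 (mod c)), and G₁(x; c) = 0 if gcd(x, c) > 1. Then there exists an absolute constant K > 0 such that for every integer x and every real C ≥ 1, one has ∑_{C ≤ c ≤ 2C} |G₁(x; c)|² ≤ K / C², the sum being over all integers c in the interval [C, 2C]. -/

import Mathlib

open Complex

/-- `e(x) = exp(2πix)`. -/
noncomputable def eAdd (x : ℝ) : ℂ := Complex.exp (2 * Real.pi * Complex.I * x)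

/-- `G₁(x; c) = c^{-2} ∑_{b mod c} e(−x̄ b²/c)` when `gcd(x, c) = 1` (with `x̄` the
inverse of `x` mod `c`, computed in `ZMod c`), and `0` otherwise. -/
noncomputable def Gone (x : ℤ) (c : ℕ) : ℂ :=
  if Int.gcd x (c : ℤ) = 1 then
    ((c : ℂ) ^ 2)⁻¹ *
      ∑ b ∈ Finset.range c, eAdd (((-((((x : ZMod c)⁻¹).val : ℤ)) * (b : ℤ) ^ 2 : ℤ) : ℝ) / c)
  else 0

open Finset in
lemma sum_zmod_range (c : ℕ) [NeZero c] (f : ZMod c → ℂ) :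
    ∑ b ∈ Finset.range c, f b = ∑ z : ZMod c, f z := by
  refine Finset.sum_nbij' (fun i => (i : ZMod c)) (fun z => z.val) ?_ ?_ ?_ ?_ ?_
  · simp
  · simp [ZMod.val_lt]
  · intro a ha; exact ZMod.val_cast_of_lt (Finset.mem_range.mp ha)
  · intro a _; simp [ZMod.natCast_val]
  · intro a _; rfl


lemma norm_stdAddChar (c : ℕ) [NeZero c] (t : ZMod c) : ‖ZMod.stdAddChar t‖ = 1 := by
  rw [ZMod.stdAddChar_apply]; exact Circle.norm_coe _

lemma conj_stdAddChar (c : ℕ) [NeZero c] (t : ZMod c) :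
    (starRingEnd ℂ) (ZMod.stdAddChar t) = ZMod.stdAddChar (-t) := by
  have h1 : ZMod.stdAddChar t * ZMod.stdAddChar (-t) = 1 := by
    rw [← AddChar.map_add_eq_mul]; simp
  have h2 : (starRingEnd ℂ) (ZMod.stdAddChar t) * ZMod.stdAddChar t = 1 := by
    rw [mul_comm, Complex.mul_conj]
    norm_cast
    rw [Complex.normSq_eq_norm_sq, norm_stdAddChar]; norm_num
  calc (starRingEnd ℂ) (ZMod.stdAddChar t)
      = (starRingEnd ℂ) (ZMod.stdAddChar t) * (ZMod.stdAddChar t * ZMod.stdAddChar (-t)) := by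
        rw [h1, mul_one]
    _ = ((starRingEnd ℂ) (ZMod.stdAddChar t) * ZMod.stdAddChar t) * ZMod.stdAddChar (-t) := by ring
    _ = ZMod.stdAddChar (-t) := by rw [h2, one_mul]

lemma card_two_torsion (c : ℕ) [NeZero c] :
    (Finset.univ.filter (fun h : ZMod c => 2 * h = 0)).card ≤ 2 := by
  have hsub : Finset.univ.filter (fun h : ZMod c => 2 * h = 0)
      ⊆ {0, ((c / 2 : ℕ) : ZMod c)} := by
    intro h hh
    rw [Finset.mem_filter] at hh
    have hv : ((2 * h.val : ℕ) : ZMod c) = 0 := by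
      push_cast
      rw [ZMod.natCast_val, ZMod.cast_id]
      exact hh.2
    have hd : c ∣ 2 * h.val := (ZMod.natCast_eq_zero_iff _ c).mp hv
    obtain ⟨k, hk⟩ := hd
    have hlt := ZMod.val_lt h
    have hk2 : k < 2 := by nlinarith [Nat.pos_of_ne_zero (NeZero.ne c)]
    rw [Finset.mem_insert, Finset.mem_singleton]
    interval_cases k
    · have : h.val = 0 := by omega
      exact Or.inl ((ZMod.val_eq_zero h).mp this)
    · have hval : h.val = c / 2 := by omega
      have h2 : h = ((h.val : ℕ) : ZMod c) := by rw [ZMod.natCast_val, ZMod.cast_id]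
      right; rw [h2, hval]
  calc (Finset.univ.filter (fun h : ZMod c => 2 * h = 0)).card
      ≤ ({0, ((c / 2 : ℕ) : ZMod c)} : Finset (ZMod c)).card := Finset.card_le_card hsub
    _ ≤ 2 := by apply le_trans (Finset.card_insert_le _ _); simp

lemma gauss_sq_bound (c : ℕ) [NeZero c] (a : ZMod c) (ha : IsUnit a) :
    ‖∑ z : ZMod c, ZMod.stdAddChar (a * z ^ 2)‖ ^ 2 ≤ 2 * c := by
  classical
  set ψ := (ZMod.stdAddChar (N := c)) with hψ
  set S := ∑ z : ZMod c, ψ (a * z ^ 2) with hS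
  have key : (Complex.normSq S : ℂ) =
      ∑ h : ZMod c, (if 2 * a * h = 0 then ψ (a * h ^ 2) * c else 0) := by
    rw [← Complex.mul_conj]
    have hconjS : (starRingEnd ℂ) S = ∑ w : ZMod c, ψ (-(a * w ^ 2)) := by
      rw [hS, map_sum]
      exact Finset.sum_congr rfl fun w _ => conj_stdAddChar c _
    have step : ∀ w : ZMod c, ∑ z : ZMod c, ψ (a * z ^ 2) * ψ (-(a * w ^ 2))
        = ∑ h : ZMod c, ψ (a * h ^ 2) * ψ (w * (2 * a * h)) := by
      intro w
      rw [← Equiv.sum_comp (Equiv.addLeft w) (fun z => ψ (a * z ^ 2) * ψ (-(a * w ^ 2)))]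
      apply Finset.sum_congr rfl
      intro h _
      rw [← AddChar.map_add_eq_mul, ← AddChar.map_add_eq_mul]
      congr 1
      simp only [Equiv.coe_addLeft]
      ring
    calc S * (starRingEnd ℂ) S
        = ∑ w : ZMod c, ∑ z : ZMod c, ψ (a * z ^ 2) * ψ (-(a * w ^ 2)) := by
          rw [hconjS, hS, Finset.sum_mul_sum, Finset.sum_comm]
      _ = ∑ w : ZMod c, ∑ h : ZMod c, ψ (a * h ^ 2) * ψ (w * (2 * a * h)) :=
          Finset.sum_congr rfl fun w _ => step w
      _ = ∑ h : ZMod c, ψ (a * h ^ 2) * ∑ w : ZMod c, ψ (w * (2 * a * h)) := by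
          rw [Finset.sum_comm]
          exact Finset.sum_congr rfl fun h _ => (Finset.mul_sum _ _ _).symm
      _ = ∑ h : ZMod c, (if 2 * a * h = 0 then ψ (a * h ^ 2) * c else 0) := by
          apply Finset.sum_congr rfl
          intro h _
          rw [AddChar.sum_mulShift _ (ZMod.isPrimitive_stdAddChar c)]
          split_ifs <;> simp [ZMod.card]
  have hnorm : ‖S‖ ^ 2 = Complex.normSq S := by
    rw [← Complex.sq_norm]
  rw [hnorm]
  have h1 : Complex.normSq S = ‖(Complex.normSq S : ℂ)‖ := by
    rw [Complex.norm_real, Real.norm_of_nonneg (Complex.normSq_nonneg S)]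
  rw [h1, key]
  calc ‖∑ h : ZMod c, (if 2 * a * h = 0 then ψ (a * h ^ 2) * c else 0)‖
      ≤ ∑ h : ZMod c, ‖(if 2 * a * h = 0 then ψ (a * h ^ 2) * c else 0)‖ :=
        norm_sum_le _ _
    _ = ∑ h : ZMod c, (if 2 * h = 0 then (c : ℝ) else 0) := by
        apply Finset.sum_congr rfl
        intro h _
        have hiff : 2 * a * h = 0 ↔ 2 * h = 0 := by
          constructor
          · intro hz
            have : a * (2 * h) = 0 := by rw [← hz]; ring
            obtain ⟨u, hu⟩ := ha
            rwa [← hu, Units.mul_right_eq_zero] at this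
          · intro hz
            have : 2 * a * h = a * (2 * h) := by ring
            rw [this, hz, mul_zero]
        rw [if_congr hiff rfl rfl]
        split_ifs
        · rw [norm_mul, norm_stdAddChar, one_mul, Complex.norm_natCast]
        · simp
    _ = (Finset.univ.filter (fun h : ZMod c => 2 * h = 0)).card * (c : ℝ) := by
        rw [← Finset.sum_filter, Finset.sum_const, nsmul_eq_mul]
    _ ≤ 2 * c := by
        have := card_two_torsion c
        have hc : (0:ℝ) ≤ (c:ℝ) := Nat.cast_nonneg c
        have : ((Finset.univ.filter (fun h : ZMod c => 2 * h = 0)).card : ℝ) ≤ 2 := by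
          exact_mod_cast this
        nlinarith


lemma Gone_norm_sq_le (x : ℤ) (c : ℕ) (hc : 0 < c) :
    ‖Gone x c‖ ^ 2 ≤ 2 / (c : ℝ) ^ 3 := by
  haveI : NeZero c := ⟨hc.ne'⟩
  rw [Gone]
  split_ifs with hgcd
  · set a : ZMod c := -((x : ZMod c)⁻¹) with hadef
    have hxu : IsUnit (x : ZMod c) := by
      obtain ⟨u, v, huv⟩ := Int.isCoprime_iff_gcd_eq_one.mpr hgcd
      apply IsUnit.of_mul_eq_one (u : ZMod c)
      have h := congrArg (fun t : ℤ => (t : ZMod c)) huv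
      push_cast at h
      simp only [ZMod.natCast_self, mul_zero, add_zero] at h
      rw [mul_comm]; exact h
    have hau : IsUnit a := by
      refine IsUnit.neg (IsUnit.of_mul_eq_one (x : ZMod c) ?_)
      exact ZMod.inv_mul_of_unit _ hxu
    have hterm : ∀ b : ℕ,
        eAdd (((-((((x : ZMod c)⁻¹).val : ℤ)) * (b : ℤ) ^ 2 : ℤ) : ℝ) / c)
          = ZMod.stdAddChar (a * ((b : ZMod c)) ^ 2) := by
      intro b
      set j : ℤ := -((((x : ZMod c)⁻¹).val : ℤ)) * (b : ℤ) ^ 2 with hj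
      have h1 : eAdd ((j : ℝ) / c) = ZMod.stdAddChar ((j : ZMod c)) := by
        rw [ZMod.stdAddChar_coe, eAdd]
        congr 1
        push_cast
        ring
      rw [h1]
      congr 1
      rw [hj]
      push_cast
      rw [ZMod.natCast_val, ZMod.cast_id]
    have hsum : ∑ b ∈ Finset.range c,
        eAdd (((-((((x : ZMod c)⁻¹).val : ℤ)) * (b : ℤ) ^ 2 : ℤ) : ℝ) / c)
          = ∑ z : ZMod c, ZMod.stdAddChar (a * z ^ 2) := by
      rw [Finset.sum_congr rfl fun b _ => hterm b]
      exact sum_zmod_range c (fun z => ZMod.stdAddChar (a * z ^ 2))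
    rw [hsum]
    have hb := gauss_sq_bound c a hau
    rw [norm_mul, mul_pow, norm_inv, norm_pow, Complex.norm_natCast]
    have hcpos : (0 : ℝ) < (c : ℝ) := by exact_mod_cast hc
    rw [inv_pow]
    calc (((c : ℝ) ^ 2) ^ 2)⁻¹ * ‖∑ z : ZMod c, ZMod.stdAddChar (a * z ^ 2)‖ ^ 2
        ≤ (((c : ℝ) ^ 2) ^ 2)⁻¹ * (2 * c) :=
          mul_le_mul_of_nonneg_left hb (by positivity)
      _ = 2 / (c : ℝ) ^ 3 := by field_simp
  · simp; positivity

/-- Second moment estimate for `G₁`: there is an absolute `K > 0` such that for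
every integer `x` and every real `C ≥ 1`,
`∑_{C ≤ c ≤ 2C} |G₁(x; c)|² ≤ K / C²`. -/
theorem Gone_second_moment :
    ∃ K : ℝ, 0 < K ∧ ∀ x : ℤ, ∀ C : ℝ, 1 ≤ C →
      ∑ c ∈ Finset.Icc ⌈C⌉₊ ⌊2 * C⌋₊, ‖Gone x c‖ ^ 2 ≤ K / C ^ 2 := by
  refine ⟨4, by norm_num, ?_⟩
  intro x C hC
  have hCpos : (0 : ℝ) < C := lt_of_lt_of_le one_pos hC
  have hterm : ∀ c ∈ Finset.Icc ⌈C⌉₊ ⌊2 * C⌋₊, ‖Gone x c‖ ^ 2 ≤ 2 / C ^ 3 := by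
    intro c hcmem
    rw [Finset.mem_Icc] at hcmem
    have hc1 : 0 < c := lt_of_lt_of_le (Nat.ceil_pos.mpr hCpos) hcmem.1
    have hcer : C ≤ (c : ℝ) := le_trans (Nat.le_ceil C) (by exact_mod_cast hcmem.1)
    refine le_trans (Gone_norm_sq_le x c hc1) ?_
    gcongr
  have hcard : ((Finset.Icc ⌈C⌉₊ ⌊2 * C⌋₊).card : ℝ) ≤ 2 * C := by
    by_cases hle : ⌈C⌉₊ ≤ ⌊2 * C⌋₊
    · rw [Nat.card_Icc, Nat.cast_sub (by omega)]
      have h1 : ((⌊2 * C⌋₊ : ℝ)) ≤ 2 * C := Nat.floor_le (by positivity)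
      have h2 : C ≤ (⌈C⌉₊ : ℝ) := Nat.le_ceil C
      push_cast
      linarith
    · rw [Finset.Icc_eq_empty (by omega)]
      simp
      positivity
  calc ∑ c ∈ Finset.Icc ⌈C⌉₊ ⌊2 * C⌋₊, ‖Gone x c‖ ^ 2
      ≤ (Finset.Icc ⌈C⌉₊ ⌊2 * C⌋₊).card • (2 / C ^ 3) :=
        Finset.sum_le_card_nsmul _ _ _ hterm
    _ = ((Finset.Icc ⌈C⌉₊ ⌊2 * C⌋₊).card : ℝ) * (2 / C ^ 3) := nsmul_eq_mul _ _
    _ ≤ (2 * C) * (2 / C ^ 3) := by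
        apply mul_le_mul_of_nonneg_right hcard (by positivity)
    _ = 4 / C ^ 2 := by field_simp; ring
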